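/- arXiv:2307.01339 — 3 statements merged into one kernel-verified Lean document; each statement's English description precedes it below -/
import Mathlib

section
/- For every r with a² + r² > 0, the gradient invariant I₅ of the Kerr–(anti-)de Sitter black hole restricted to the symmetry axis θ = 0 satisfies I₅(r, 0) = −1354752 m⁴ (a⁶ − 5a⁴r² + 3a²r⁴ − r⁶/7)² r² (Λr⁴ + (Λa² − 3)r² + 6mr − 3a²)/(a² + r²)¹⁵; in particular I₅(r, 0) = 0 whenever Λr⁴ + (Λa² − 3)r² + 6mr − 3a² = 0, i.e. at the stationary horizon radii. -/
noncomputable section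

namespace KerrAdS

/-- `ρ² = r² + a² cos²θ` in Boyer–Lindquist coordinates. -/
def rho2 (a r θ : ℝ) : ℝ := r ^ 2 + a ^ 2 * Real.cos θ ^ 2

/-- The complex combination `I₁ + i I₂ = 48 m² (r − i a cos θ)⁶ / ρ¹²`
(the orientation convention `I₁ + iI₂ = 48 Ψ₂²` with `Ψ₂ = −m/(r + i a cos θ)³`). -/
def Ic (a m r θ : ℝ) : ℂ :=
  48 * (m : ℂ) ^ 2 * ((r : ℂ) - Complex.I * ((a * Real.cos θ : ℝ) : ℂ)) ^ 6 /
    ((rho2 a r θ : ℝ) : ℂ) ^ 6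

/-- The Weyl invariant `I₁ = C_{αβγδ} C^{αβγδ}` of the Kerr–(anti-)de Sitter black hole. -/
def I1 (a m r θ : ℝ) : ℝ := (Ic a m r θ).re

/-- The Chern–Pontryagin invariant `I₂ = C*_{αβγδ} C^{αβγδ}`. -/
def I2 (a m r θ : ℝ) : ℝ := (Ic a m r θ).im

/-- `Δ_r = (1 − Λr²/3)(r² + a²) − 2mr`. -/
def Δr (a m Λ r : ℝ) : ℝ := (1 - Λ * r ^ 2 / 3) * (r ^ 2 + a ^ 2) - 2 * m * r

/-- `Δ_θ = 1 + (a²Λ/3) cos²θ`. -/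
def Δθ (a Λ θ : ℝ) : ℝ := 1 + a ^ 2 * Λ / 3 * Real.cos θ ^ 2

/-- The gradient invariant `I₅ = ∇_μ I₁ ∇^μ I₁
  = (Δ_r/ρ²)(∂_r I₁)² + (Δ_θ/ρ²)(∂_θ I₁)²`. -/
def I5 (a m Λ r θ : ℝ) : ℝ :=
  Δr a m Λ r / rho2 a r θ * (deriv (fun r' => I1 a m r' θ) r) ^ 2 +
    Δθ a Λ θ / rho2 a r θ * (deriv (fun θ' => I1 a m r θ') θ) ^ 2

/-- The gradient invariant `I₆ = ∇_μ I₂ ∇^μ I₂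
  = (Δ_r/ρ²)(∂_r I₂)² + (Δ_θ/ρ²)(∂_θ I₂)²`. -/
def I6 (a m Λ r θ : ℝ) : ℝ :=
  Δr a m Λ r / rho2 a r θ * (deriv (fun r' => I2 a m r' θ) r) ^ 2 +
    Δθ a Λ θ / rho2 a r θ * (deriv (fun θ' => I2 a m r θ') θ) ^ 2

/-- The gradient invariant `I₇ = ∇_μ I₁ ∇^μ I₂
  = (Δ_r/ρ²)(∂_r I₁)(∂_r I₂) + (Δ_θ/ρ²)(∂_θ I₁)(∂_θ I₂)`. -/
def I7 (a m Λ r θ : ℝ) : ℝ :=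
  Δr a m Λ r / rho2 a r θ *
      (deriv (fun r' => I1 a m r' θ) r) * (deriv (fun r' => I2 a m r' θ) r) +
    Δθ a Λ θ / rho2 a r θ *
      (deriv (fun θ' => I1 a m r θ') θ) * (deriv (fun θ' => I2 a m r θ') θ)

/-- The ergosurface polynomial
`E = Λa⁴c⁴ − Λa⁴c² − Λa²r² − Λr⁴ + 3a²c² − 6mr + 3r²`, `c = cos θ`. -/
def E (a m Λ r θ : ℝ) : ℝ :=
  Λ * a ^ 4 * Real.cos θ ^ 4 - Λ * a ^ 4 * Real.cos θ ^ 2 - Λ * a ^ 2 * r ^ 2 - Λ * r ^ 4 +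
    3 * a ^ 2 * Real.cos θ ^ 2 - 6 * m * r + 3 * r ^ 2

/-- The differential Weyl invariant `I₃ = ∇_μ C_{αβγδ} ∇^μ C^{αβγδ}`
(explicit closed form). -/
def I3 (a m Λ r θ : ℝ) : ℝ :=
  240 * m ^ 2 / rho2 a r θ ^ 9 *
    (a ^ 4 * Real.cos θ ^ 4 - 4 * a ^ 3 * Real.cos θ ^ 3 * r
      - 6 * a ^ 2 * Real.cos θ ^ 2 * r ^ 2 + 4 * a * Real.cos θ * r ^ 3 + r ^ 4) *
    (a ^ 4 * Real.cos θ ^ 4 + 4 * a ^ 3 * Real.cos θ ^ 3 * r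
      - 6 * a ^ 2 * Real.cos θ ^ 2 * r ^ 2 - 4 * a * Real.cos θ * r ^ 3 + r ^ 4) *
    E a m Λ r θ

/-- The mixed differential Weyl invariant `I₄ = ∇_μ C_{αβγδ} ∇^μ C*^{αβγδ}`
(explicit closed form). -/
def I4 (a m Λ r θ : ℝ) : ℝ :=
  1920 * a * Real.cos θ * r * m ^ 2 / rho2 a r θ ^ 9 * E a m Λ r θ *
    (a ^ 2 * Real.cos θ ^ 2 - 2 * a * Real.cos θ * r - r ^ 2) *
    (a ^ 2 * Real.cos θ ^ 2 + 2 * a * Real.cos θ * r - r ^ 2) *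
    (a ^ 2 * Real.cos θ ^ 2 - r ^ 2)

end KerrAdS

namespace KerrAdS

/-- Auxiliary: closed real form of `I₁`. -/
lemma I1_eq' (a m r θ : ℝ) :
    I1 a m r θ = 48 * m ^ 2 * (r ^ 6 - 15 * r ^ 4 * (a * Real.cos θ) ^ 2
      + 15 * r ^ 2 * (a * Real.cos θ) ^ 4 - (a * Real.cos θ) ^ 6) / (rho2 a r θ) ^ 6 := by
  set c := a * Real.cos θ with hc
  set X := 48 * m ^ 2 * (r ^ 6 - 15 * r ^ 4 * c ^ 2 + 15 * r ^ 2 * c ^ 4 - c ^ 6) with hX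
  set Y := 48 * m ^ 2 * (-6 * r ^ 5 * c + 20 * r ^ 3 * c ^ 3 - 6 * r * c ^ 5) with hY
  set D := rho2 a r θ with hD
  have h2 : (48 * (m : ℂ) ^ 2 * ((r : ℂ) - Complex.I * (c : ℂ)) ^ 6) / ((D : ℝ) : ℂ) ^ 6
      = ((X / D ^ 6 : ℝ) : ℂ) + ((Y / D ^ 6 : ℝ) : ℂ) * Complex.I := by
    have h3 : (48 * (m : ℂ) ^ 2 * ((r : ℂ) - Complex.I * (c : ℂ)) ^ 6)
        = ((X : ℝ) : ℂ) + ((Y : ℝ) : ℂ) * Complex.I := by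
      apply Complex.ext <;>
        simp [hX, hY, pow_succ, Complex.mul_re, Complex.mul_im] <;> ring_nf <;> tauto
    rw [h3]
    push_cast
    ring
  simp only [I1, Ic, ← hc, ← hD, h2]
  simp only [Complex.add_re, Complex.mul_re, Complex.I_re, Complex.I_im,
    Complex.ofReal_re, Complex.ofReal_im]
  ring

/-- Auxiliary: derivative of the generic rational shape appearing in `I₁`. -/
lemma hasDerivAt_F' (k b2 b4 b6 d0 d2 x : ℝ) (hd : (d0 + d2 * x ^ 2) ^ 6 ≠ 0) :
    HasDerivAt (fun c : ℝ => (k + b2 * c ^ 2 + b4 * c ^ 4 + b6 * c ^ 6) / (d0 + d2 * c ^ 2) ^ 6)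
      (((2 * b2 * x + 4 * b4 * x ^ 3 + 6 * b6 * x ^ 5) * (d0 + d2 * x ^ 2) ^ 6
          - (k + b2 * x ^ 2 + b4 * x ^ 4 + b6 * x ^ 6)
            * (6 * (d0 + d2 * x ^ 2) ^ 5 * (2 * d2 * x)))
        / ((d0 + d2 * x ^ 2) ^ 6) ^ 2) x := by
  have hN : HasDerivAt (fun c : ℝ => k + b2 * c ^ 2 + b4 * c ^ 4 + b6 * c ^ 6)
      (2 * b2 * x + 4 * b4 * x ^ 3 + 6 * b6 * x ^ 5) x := by
    have h2 := (hasDerivAt_pow 2 x).const_mul b2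
    have h4 := (hasDerivAt_pow 4 x).const_mul b4
    have h6 := (hasDerivAt_pow 6 x).const_mul b6
    have h := ((h2.const_add k).add h4).add h6
    exact h.congr_deriv (by push_cast; ring)
  have hD : HasDerivAt (fun c : ℝ => (d0 + d2 * c ^ 2) ^ 6)
      (6 * (d0 + d2 * x ^ 2) ^ 5 * (2 * d2 * x)) x := by
    have h := (((hasDerivAt_pow 2 x).const_mul d2).const_add d0).pow 6
    exact h.congr_deriv (by push_cast; ring)
  exact hN.div hD hd

/-- Auxiliary: radial derivative of `I₁` on the axis. -/
lemma deriv_I1_r' (a m r : ℝ) (h : 0 < a ^ 2 + r ^ 2) :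
    deriv (fun r' => I1 a m r' 0) r =
      2016 * m ^ 2 * r * (a ^ 6 - 5 * a ^ 4 * r ^ 2 + 3 * a ^ 2 * r ^ 4 - r ^ 6 / 7)
        / (a ^ 2 + r ^ 2) ^ 7 := by
  have hne : a ^ 2 + r ^ 2 ≠ 0 := ne_of_gt h
  have hd : ((a ^ 2 : ℝ) + 1 * r ^ 2) ^ 6 ≠ 0 := by
    rw [show (a ^ 2 : ℝ) + 1 * r ^ 2 = a ^ 2 + r ^ 2 by ring]
    exact pow_ne_zero _ hne
  have hfun : (fun r' => I1 a m r' 0) = (fun c : ℝ =>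
      ((-48 * m ^ 2 * a ^ 6) + (720 * m ^ 2 * a ^ 4) * c ^ 2 + (-720 * m ^ 2 * a ^ 2) * c ^ 4
        + (48 * m ^ 2) * c ^ 6) / ((a ^ 2) + (1 : ℝ) * c ^ 2) ^ 6) := by
    funext r'
    rw [I1_eq', rho2, Real.cos_zero,
      show r' ^ 2 + a ^ 2 * (1 : ℝ) ^ 2 = a ^ 2 + 1 * r' ^ 2 by ring]
    ring
  rw [hfun, (hasDerivAt_F' (-48 * m ^ 2 * a ^ 6) (720 * m ^ 2 * a ^ 4) (-720 * m ^ 2 * a ^ 2)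
    (48 * m ^ 2) (a ^ 2) 1 r hd).deriv]
  field_simp
  ring

/-- Auxiliary: the `θ`-derivative of `I₁` vanishes on the axis. -/
lemma deriv_I1_theta' (a m r : ℝ) (h : 0 < a ^ 2 + r ^ 2) :
    deriv (fun θ' => I1 a m r θ') 0 = 0 := by
  have hne : a ^ 2 + r ^ 2 ≠ 0 := ne_of_gt h
  have hd : ((r ^ 2 : ℝ) + a ^ 2 * (1 : ℝ) ^ 2) ^ 6 ≠ 0 := by
    rw [show (r ^ 2 : ℝ) + a ^ 2 * (1 : ℝ) ^ 2 = a ^ 2 + r ^ 2 by ring]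
    exact pow_ne_zero _ hne
  have hfun : (fun θ' => I1 a m r θ') = (fun c : ℝ =>
      ((48 * m ^ 2 * r ^ 6) + (-720 * m ^ 2 * r ^ 4 * a ^ 2) * c ^ 2
        + (720 * m ^ 2 * r ^ 2 * a ^ 4) * c ^ 4 + (-48 * m ^ 2 * a ^ 6) * c ^ 6)
        / ((r ^ 2) + (a ^ 2) * c ^ 2) ^ 6) ∘ Real.cos := by
    funext θ'
    simp only [Function.comp]
    rw [I1_eq', rho2]
    ring
  have hF := hasDerivAt_F' (48 * m ^ 2 * r ^ 6) (-720 * m ^ 2 * r ^ 4 * a ^ 2)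
    (720 * m ^ 2 * r ^ 2 * a ^ 4) (-48 * m ^ 2 * a ^ 6) (r ^ 2) (a ^ 2) 1 hd
  rw [show (1 : ℝ) = Real.cos 0 from Real.cos_zero.symm] at hF
  have hcos : HasDerivAt Real.cos 0 0 := by simpa using Real.hasDerivAt_cos 0
  have hcomp := hF.comp 0 hcos
  rw [hfun, hcomp.deriv, mul_zero]

/-- On the symmetry axis `θ = 0` the gradient invariant `I₅` of the
Kerr–(anti-)de Sitter black hole takes the stated closed form; in particular it vanishes
at the stationary horizon radii, i.e. whenever `Λr⁴ + (Λa² − 3)r² + 6mr − 3a² = 0`. -/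
theorem I5_axis (a m Λ : ℝ) :
    ∀ r : ℝ, 0 < a ^ 2 + r ^ 2 →
      I5 a m Λ r 0 =
        -(1354752 * m ^ 4 * (a ^ 6 - 5 * a ^ 4 * r ^ 2 + 3 * a ^ 2 * r ^ 4 - r ^ 6 / 7) ^ 2 *
            r ^ 2 * (Λ * r ^ 4 + (Λ * a ^ 2 - 3) * r ^ 2 + 6 * m * r - 3 * a ^ 2)) /
          (a ^ 2 + r ^ 2) ^ 15 ∧
      (Λ * r ^ 4 + (Λ * a ^ 2 - 3) * r ^ 2 + 6 * m * r - 3 * a ^ 2 = 0 →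
        I5 a m Λ r 0 = 0) := by
  intro r hr
  have hne : a ^ 2 + r ^ 2 ≠ 0 := ne_of_gt hr
  have key : I5 a m Λ r 0 =
      -(1354752 * m ^ 4 * (a ^ 6 - 5 * a ^ 4 * r ^ 2 + 3 * a ^ 2 * r ^ 4 - r ^ 6 / 7) ^ 2 *
          r ^ 2 * (Λ * r ^ 4 + (Λ * a ^ 2 - 3) * r ^ 2 + 6 * m * r - 3 * a ^ 2)) /
        (a ^ 2 + r ^ 2) ^ 15 := by
    rw [I5, deriv_I1_r' a m r hr, deriv_I1_theta' a m r hr, rho2, Real.cos_zero, Δr,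
      show r ^ 2 + a ^ 2 * (1 : ℝ) ^ 2 = a ^ 2 + r ^ 2 by ring]
    field_simp
    ring
  refine ⟨key, fun h0 => ?_⟩
  rw [key, h0, mul_zero, neg_zero, zero_div]


end KerrAdS
end
end

section
/- For every r with a² + r² > 0, the gradient invariant I₆ of the Kerr–(anti-)de Sitter black hole restricted to the symmetry axis θ = 0 satisfies I₆(r, 0) = −27648 m⁴ a² (a⁶ − 21a⁴r² + 35a²r⁴ − 7r⁶)² (Λr⁴ + (Λa² − 3)r² + 6mr − 3a²)/(a² + r²)¹⁵; in particular I₆(r, 0) = 0 whenever Λr⁴ + (Λa² − 3)r² + 6mr − 3a² = 0, i.e. at the stationary horizon radii. -/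
noncomputable section

namespace KerrAdS


lemma im_quot (m X Y t : ℝ) :
    (48*(m:ℂ)^2*(((X:ℝ):ℂ)+((Y:ℝ):ℂ)*Complex.I)/((t:ℝ):ℂ)).im = 48*m^2*Y/t := by
  rw [Complex.div_ofReal_im]
  simp [← Complex.ofReal_pow]

lemma key_pow (r b : ℝ) :
    ((r:ℂ) - Complex.I*(b:ℝ))^6 =
      ((r^6 - 15*r^4*b^2 + 15*r^2*b^4 - b^6 : ℝ) : ℂ) +
      ((-(6*r^5*b) + 20*r^3*b^3 - 6*r*b^5 : ℝ):ℂ) * Complex.I := by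
  push_cast
  linear_combination ((b:ℂ)^6*Complex.I^4 - 6*r*b^5*Complex.I^3
    + (15*r^2*b^4 - b^6)*Complex.I^2 + (-20*r^3*b^3+6*r*b^5)*Complex.I
    + (15*r^4*b^2 - 15*r^2*b^4 + b^6)) * Complex.I_sq

lemma I2_eq (a m r θ : ℝ) :
    I2 a m r θ = 48*m^2*(-(6*r^5*(a*Real.cos θ)) + 20*r^3*(a*Real.cos θ)^3
      - 6*r*(a*Real.cos θ)^5) / (rho2 a r θ)^6 := by
  unfold I2 Ic
  rw [key_pow r (a*Real.cos θ)]
  rw [show ((rho2 a r θ:ℝ):ℂ)^6 = (((rho2 a r θ)^6 : ℝ):ℂ) by push_cast; ring]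
  rw [im_quot]

lemma deriv_r (a m r : ℝ) (h : r^2 + a^2 ≠ 0) :
    deriv (fun r' => I2 a m r' 0) r =
      -288*m^2*a*(a^6 - 21*a^4*r^2 + 35*a^2*r^4 - 7*r^6) / (r^2+a^2)^7 := by
  have hfun : (fun r' => I2 a m r' 0) =
      fun x : ℝ => (48*m^2) * ((-(6:ℝ)*a) * x^5 + ((20*a^3) * x^3 + (-(6:ℝ)*a^5) * x^1))
        / (x^2+a^2)^6 := by
    funext x
    rw [I2_eq]
    simp [rho2]
    ring
  have hN : HasDerivAt
      (fun x : ℝ => (48*m^2) * ((-(6:ℝ)*a) * x^5 + ((20*a^3) * x^3 + (-(6:ℝ)*a^5) * x^1)))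
      ((48*m^2) * ((-(6:ℝ)*a) * ((5:ℕ) * r^4) + ((20*a^3) * ((3:ℕ) * r^2)
        + (-(6:ℝ)*a^5) * ((1:ℕ) * r^0)))) r :=
    (((hasDerivAt_pow 5 r).const_mul (-(6:ℝ)*a)).add
      (((hasDerivAt_pow 3 r).const_mul (20*a^3)).add
        ((hasDerivAt_pow 1 r).const_mul (-(6:ℝ)*a^5)))).const_mul (48*m^2)
  have hD : HasDerivAt (fun x : ℝ => (x^2+a^2)^6)
      ((6:ℕ) * (r^2+a^2)^5 * ((2:ℕ) * r^1)) r :=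
    ((hasDerivAt_pow 2 r).add_const (a^2)).pow 6
  have hq : HasDerivAt (fun x : ℝ => (48*m^2) * ((-(6:ℝ)*a) * x^5 + ((20*a^3) * x^3 + (-(6:ℝ)*a^5) * x^1))
      / (x^2+a^2)^6) _ r := hN.div hD (pow_ne_zero 6 h)
  rw [hfun, hq.deriv]
  have h6 : (r^2+a^2)^6 ≠ 0 := pow_ne_zero 6 h
  field_simp
  ring

lemma deriv_theta (a m r : ℝ) (h : r^2 + a^2 ≠ 0) :
    deriv (fun θ' => I2 a m r θ') 0 = 0 := by
  set G : ℝ → ℝ := fun c : ℝ =>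
    (48*m^2) * ((-(6:ℝ)*r^5*a) * c^1 + ((20*r^3*a^3) * c^3 + (-(6:ℝ)*r*a^5) * c^5))
      / (r^2 + a^2 * c^2)^6 with hG
  have hfun : (fun θ' => I2 a m r θ') = G ∘ Real.cos := by
    funext θ'
    rw [I2_eq]
    simp [rho2, hG, Function.comp]
    ring
  have hNum : HasDerivAt
      (fun c : ℝ => (48*m^2) * ((-(6:ℝ)*r^5*a) * c^1 + ((20*r^3*a^3) * c^3
        + (-(6:ℝ)*r*a^5) * c^5)))
      ((48*m^2) * ((-(6:ℝ)*r^5*a) * ((1:ℕ) * (1:ℝ)^0) + ((20*r^3*a^3) * ((3:ℕ) * (1:ℝ)^2)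
        + (-(6:ℝ)*r*a^5) * ((5:ℕ) * (1:ℝ)^4)))) 1 :=
    (((hasDerivAt_pow 1 (1:ℝ)).const_mul (-(6:ℝ)*r^5*a)).add
      (((hasDerivAt_pow 3 (1:ℝ)).const_mul (20*r^3*a^3)).add
        (((hasDerivAt_pow 5 (1:ℝ)).const_mul (-(6:ℝ)*r*a^5))))).const_mul (48*m^2)
  have hDen : HasDerivAt (fun c : ℝ => (r^2 + a^2 * c^2)^6)
      ((6:ℕ) * (r^2 + a^2 * (1:ℝ)^2)^5 * (a^2 * ((2:ℕ) * (1:ℝ)^1))) 1 :=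
    (((hasDerivAt_pow 2 (1:ℝ)).const_mul (a^2)).const_add (r^2)).pow 6
  have hden1 : (r^2 + a^2 * (1:ℝ)^2)^6 ≠ 0 := by
    simpa using pow_ne_zero 6 h
  obtain ⟨d, hd⟩ : ∃ d, HasDerivAt G d (Real.cos 0) :=
    ⟨_, by rw [Real.cos_zero]; exact hNum.div hDen hden1⟩
  have hcomp := HasDerivAt.comp 0 hd (Real.hasDerivAt_cos 0)
  rw [hfun, hcomp.deriv]
  simp

/-- On the symmetry axis `θ = 0` the gradient invariant `I₆` of the
Kerr–(anti-)de Sitter black hole takes the stated closed form; in particular it vanishes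
at the stationary horizon radii, i.e. whenever `Λr⁴ + (Λa² − 3)r² + 6mr − 3a² = 0`. -/
theorem I6_axis (a m Λ : ℝ) :
    ∀ r : ℝ, 0 < a ^ 2 + r ^ 2 →
      I6 a m Λ r 0 =
        -(27648 * m ^ 4 * a ^ 2 *
            (a ^ 6 - 21 * a ^ 4 * r ^ 2 + 35 * a ^ 2 * r ^ 4 - 7 * r ^ 6) ^ 2 *
            (Λ * r ^ 4 + (Λ * a ^ 2 - 3) * r ^ 2 + 6 * m * r - 3 * a ^ 2)) /
          (a ^ 2 + r ^ 2) ^ 15 ∧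
      (Λ * r ^ 4 + (Λ * a ^ 2 - 3) * r ^ 2 + 6 * m * r - 3 * a ^ 2 = 0 →
        I6 a m Λ r 0 = 0) := by
  intro r hr
  have h0 : r ^ 2 + a ^ 2 ≠ 0 := by nlinarith
  have h1 : I6 a m Λ r 0 =
      -(27648 * m ^ 4 * a ^ 2 *
          (a ^ 6 - 21 * a ^ 4 * r ^ 2 + 35 * a ^ 2 * r ^ 4 - 7 * r ^ 6) ^ 2 *
          (Λ * r ^ 4 + (Λ * a ^ 2 - 3) * r ^ 2 + 6 * m * r - 3 * a ^ 2)) /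
        (a ^ 2 + r ^ 2) ^ 15 := by
    unfold I6
    rw [deriv_r a m r h0, deriv_theta a m r h0]
    unfold rho2 Δr Δθ
    rw [Real.cos_zero]
    have h7 : (r ^ 2 + a ^ 2) ^ 7 ≠ 0 := pow_ne_zero 7 h0
    have h15 : (a ^ 2 + r ^ 2) ^ 15 ≠ 0 := pow_ne_zero 15 (by nlinarith)
    have h1' : r ^ 2 + a ^ 2 * (1:ℝ) ^ 2 ≠ 0 := by simpa using h0
    field_simp
    ring
  refine ⟨h1, fun hP => ?_⟩
  rw [h1, hP]
  simp

end KerrAdS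
end
end

section
/- For the Kerr–(anti-)de Sitter black hole, for all m > 0 and all (r, θ) with r² + a²cos²θ > 0, the Abdelqader–Lake invariant Q₁ = (1/(3√3))·((I₁² − I₂²)(I₅ − I₆) + 4I₁I₂I₇)/(I₁² + I₂²)^{9/4} satisfies the closed-form identity Q₁(r, θ) = −E(r, θ)·(a²cos²θ − r²)/(3m(r² + a²cos²θ)^{3/2}); in particular Q₁ vanishes on the ergosurfaces E = 0 and on the cones r = ±a·cosθ. -/
noncomputable section

namespace KerrAdS

/-- The Abdelqader–Lake invariant
`Q₁ = (1/(3√3)) ((I₁² − I₂²)(I₅ − I₆) + 4I₁I₂I₇)/(I₁² + I₂²)^{9/4}`. -/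
def Q1 (a m Λ r θ : ℝ) : ℝ :=
  1 / (3 * Real.sqrt 3) *
    ((I1 a m r θ ^ 2 - I2 a m r θ ^ 2) * (I5 a m Λ r θ - I6 a m Λ r θ) +
      4 * I1 a m r θ * I2 a m r θ * I7 a m Λ r θ) /
    (I1 a m r θ ^ 2 + I2 a m r θ ^ 2) ^ ((9 : ℝ) / 4)

/-! ### Auxiliary lemmas -/

lemma zero_iff (r b : ℝ) : (r : ℂ) + Complex.I * (b : ℂ) = 0 ↔ r = 0 ∧ b = 0 := by
  simp [Complex.ext_iff]

lemma sub_zero_iff (r b : ℝ) : (r : ℂ) - Complex.I * (b : ℂ) = 0 ↔ r = 0 ∧ b = 0 := by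
  simp [Complex.ext_iff, neg_eq_zero]

lemma cast_rho' (r b : ℝ) : ((r ^ 2 + b ^ 2 : ℝ) : ℂ)
    = ((r : ℂ) - Complex.I * (b : ℂ)) * ((r : ℂ) + Complex.I * (b : ℂ)) := by
  push_cast
  linear_combination ((b:ℂ)^2) * Complex.I_sq

lemma Ic_eq' (m r b : ℝ) :
    48 * (m : ℂ) ^ 2 * ((r : ℂ) - Complex.I * (b : ℂ)) ^ 6 / ((r ^ 2 + b ^ 2 : ℝ) : ℂ) ^ 6
      = 48 * (m : ℂ) ^ 2 / ((r : ℂ) + Complex.I * (b : ℂ)) ^ 6 := by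
  rw [cast_rho' r b]
  by_cases hw : (r : ℂ) + Complex.I * (b : ℂ) = 0
  · have h0 := (zero_iff r b).mp hw
    rw [hw, (sub_zero_iff r b).mpr h0]
    simp
  · have h2 : (r : ℂ) - Complex.I * (b : ℂ) ≠ 0 := by
      intro h
      exact hw ((zero_iff r b).mpr ((sub_zero_iff r b).mp h))
    field_simp

lemma Ic_eq (a m r θ : ℝ) :
    Ic a m r θ = 48 * (m : ℂ) ^ 2 / ((r : ℂ) + Complex.I * ((a * Real.cos θ : ℝ) : ℂ)) ^ 6 := by
  unfold Ic rho2
  have hb2 : r ^ 2 + a ^ 2 * Real.cos θ ^ 2 = r ^ 2 + (a * Real.cos θ) ^ 2 := by ring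
  rw [hb2, Ic_eq' m r (a * Real.cos θ)]

lemma pow6 {h : ℝ → ℂ} {h' : ℂ} {x : ℝ} (hh : HasDerivAt h h' x) :
    HasDerivAt (fun y => h y ^ 6) (6 * h x ^ 5 * h') x := by
  have := (hasDerivAt_pow 6 (h x)).scomp x hh
  have h2 := hh.pow 6
  exact h2.congr_deriv (by norm_num)

lemma hasDerivAt_r (m b r : ℝ) (hw : (r : ℂ) + Complex.I * (b : ℂ) ≠ 0) :
    HasDerivAt (fun r' : ℝ => 48 * (m : ℂ) ^ 2 / (((r' : ℝ) : ℂ) + Complex.I * (b : ℂ)) ^ 6)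
      (-288 * (m : ℂ) ^ 2 / ((r : ℂ) + Complex.I * (b : ℂ)) ^ 7) r := by
  have h1 : HasDerivAt (fun r' : ℝ => ((r' : ℝ) : ℂ) + Complex.I * (b : ℂ)) 1 r := by
    simpa using (Complex.ofRealCLM.hasDerivAt (x := r)).add_const (Complex.I * (b : ℂ))
  have hd := (hasDerivAt_const r (48 * (m : ℂ) ^ 2)).div (pow6 h1) (pow_ne_zero 6 hw)
  refine hd.congr_deriv ?_
  field_simp
  ring

lemma hasDerivAt_θfun (a m r θ : ℝ) (hw : (r : ℂ) + Complex.I * ((a * Real.cos θ : ℝ) : ℂ) ≠ 0) :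
    HasDerivAt (fun θ' : ℝ => 48 * (m : ℂ) ^ 2 / ((r : ℂ) + Complex.I * ((a * Real.cos θ' : ℝ) : ℂ)) ^ 6)
      (288 * (m : ℂ) ^ 2 * Complex.I * ((a * Real.sin θ : ℝ) : ℂ)
        / ((r : ℂ) + Complex.I * ((a * Real.cos θ : ℝ) : ℂ)) ^ 7) θ := by
  have hcos : HasDerivAt (fun θ' : ℝ => a * Real.cos θ') (a * -Real.sin θ) θ :=
    (Real.hasDerivAt_cos θ).const_mul a
  have hb : HasDerivAt (fun θ' : ℝ => ((a * Real.cos θ' : ℝ) : ℂ))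
      ((a * -Real.sin θ : ℝ) : ℂ) θ := hcos.ofReal_comp
  have h1 : HasDerivAt (fun θ' : ℝ => (r : ℂ) + Complex.I * ((a * Real.cos θ' : ℝ) : ℂ))
      (Complex.I * ((a * -Real.sin θ : ℝ) : ℂ)) θ := (hb.const_mul Complex.I).const_add _
  have hd := (hasDerivAt_const θ (48 * (m : ℂ) ^ 2)).div (pow6 h1) (pow_ne_zero 6 hw)
  refine hd.congr_deriv ?_
  have hs : ((a * -Real.sin θ : ℝ) : ℂ) = -((a * Real.sin θ : ℝ) : ℂ) := by
    push_cast; ring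
  rw [hs]
  set w : ℂ := (r : ℂ) + Complex.I * ((a * Real.cos θ : ℝ) : ℂ) with hwdef
  field_simp
  ring

lemma hasDerivAt_re {f : ℝ → ℂ} {d : ℂ} {x : ℝ} (hf : HasDerivAt f d x) :
    HasDerivAt (fun y => (f y).re) d.re x := by
  exact (Complex.reCLM.hasFDerivAt.comp_hasDerivAt x hf)

lemma hasDerivAt_im {f : ℝ → ℂ} {d : ℂ} {x : ℝ} (hf : HasDerivAt f d x) :
    HasDerivAt (fun y => (f y).im) d.im x := by
  exact (Complex.imCLM.hasFDerivAt.comp_hasDerivAt x hf)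

lemma num_bridge (Dr Dθ P : ℝ) (z dr dth : ℂ) :
    (z.re ^ 2 - z.im ^ 2) *
        ((Dr / P * dr.re ^ 2 + Dθ / P * dth.re ^ 2) - (Dr / P * dr.im ^ 2 + Dθ / P * dth.im ^ 2))
      + 4 * z.re * z.im * (Dr / P * dr.re * dr.im + Dθ / P * dth.re * dth.im)
    = Dr / P * ((starRingEnd ℂ z) ^ 2 * dr ^ 2).re
      + Dθ / P * ((starRingEnd ℂ z) ^ 2 * dth ^ 2).re := by
  simp only [pow_two, Complex.mul_re, Complex.mul_im, Complex.conj_re, Complex.conj_im]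
  ring

lemma conj_z (m r b : ℝ) :
    starRingEnd ℂ (48 * (m : ℂ) ^ 2 / ((r : ℂ) + Complex.I * (b : ℂ)) ^ 6)
      = 48 * (m : ℂ) ^ 2 / ((r : ℂ) - Complex.I * (b : ℂ)) ^ 6 := by
  simp [map_div₀, Complex.conj_I, map_ofNat]
  ring_nf

lemma re_K_dr (m r b P : ℝ) (hw : (r : ℂ) + Complex.I * (b : ℂ) ≠ 0)
    (hv : (r : ℂ) - Complex.I * (b : ℂ) ≠ 0) (hP : P = r ^ 2 + b ^ 2) :
    ((starRingEnd ℂ (48 * (m : ℂ) ^ 2 / ((r : ℂ) + Complex.I * (b : ℂ)) ^ 6)) ^ 2 *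
        (-288 * (m : ℂ) ^ 2 / ((r : ℂ) + Complex.I * (b : ℂ)) ^ 7) ^ 2).re
      = 48 ^ 2 * 288 ^ 2 * m ^ 8 * (r ^ 2 - b ^ 2) / P ^ 14 := by
  rw [conj_z]
  have key : (48 * (m : ℂ) ^ 2 / ((r : ℂ) - Complex.I * (b : ℂ)) ^ 6) ^ 2 *
        (-288 * (m : ℂ) ^ 2 / ((r : ℂ) + Complex.I * (b : ℂ)) ^ 7) ^ 2
      = ((48 ^ 2 * 288 ^ 2 * m ^ 8 / P ^ 14 : ℝ) : ℂ) * ((r : ℂ) - Complex.I * (b : ℂ)) ^ 2 := by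
    have hPc : ((P : ℝ) : ℂ) = ((r : ℂ) - Complex.I * (b : ℂ)) * ((r : ℂ) + Complex.I * (b : ℂ)) := by
      rw [hP]; exact cast_rho' r b
    push_cast
    rw [show ((P : ℝ) : ℂ) ^ 14
        = (((r : ℂ) - Complex.I * (b : ℂ)) * ((r : ℂ) + Complex.I * (b : ℂ))) ^ 14 by rw [hPc]]
    field_simp
  rw [key]
  have h2 : (((r : ℂ) - Complex.I * (b : ℂ)) ^ 2).re = r ^ 2 - b ^ 2 := by
    simp [pow_two, Complex.mul_re]
  rw [Complex.re_ofReal_mul, h2]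
  ring

lemma re_K_dth (m r b s P : ℝ) (hw : (r : ℂ) + Complex.I * (b : ℂ) ≠ 0)
    (hv : (r : ℂ) - Complex.I * (b : ℂ) ≠ 0) (hP : P = r ^ 2 + b ^ 2) :
    ((starRingEnd ℂ (48 * (m : ℂ) ^ 2 / ((r : ℂ) + Complex.I * (b : ℂ)) ^ 6)) ^ 2 *
        (288 * (m : ℂ) ^ 2 * Complex.I * (s : ℂ) / ((r : ℂ) + Complex.I * (b : ℂ)) ^ 7) ^ 2).re
      = -(48 ^ 2 * 288 ^ 2) * m ^ 8 * s ^ 2 * (r ^ 2 - b ^ 2) / P ^ 14 := by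
  rw [conj_z]
  have key : (48 * (m : ℂ) ^ 2 / ((r : ℂ) - Complex.I * (b : ℂ)) ^ 6) ^ 2 *
        (288 * (m : ℂ) ^ 2 * Complex.I * (s : ℂ) / ((r : ℂ) + Complex.I * (b : ℂ)) ^ 7) ^ 2
      = ((-(48 ^ 2 * 288 ^ 2) * m ^ 8 * s ^ 2 / P ^ 14 : ℝ) : ℂ)
          * ((r : ℂ) - Complex.I * (b : ℂ)) ^ 2 := by
    have hPc : ((P : ℝ) : ℂ) = ((r : ℂ) - Complex.I * (b : ℂ)) * ((r : ℂ) + Complex.I * (b : ℂ)) := by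
      rw [hP]; exact cast_rho' r b
    push_cast
    rw [show ((P : ℝ) : ℂ) ^ 14
        = (((r : ℂ) - Complex.I * (b : ℂ)) * ((r : ℂ) + Complex.I * (b : ℂ))) ^ 14 by rw [hPc]]
    field_simp
    linear_combination ((m:ℂ) ^ 8 * (s:ℂ) ^ 2) * Complex.I_sq
  rw [key]
  have h2 : (((r : ℂ) - Complex.I * (b : ℂ)) ^ 2).re = r ^ 2 - b ^ 2 := by
    simp [pow_two, Complex.mul_re]
  rw [Complex.re_ofReal_mul, h2]
  ring

lemma normSq_z (m r b P : ℝ) (hP : P = r ^ 2 + b ^ 2) :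
    (48 * (m : ℂ) ^ 2 / ((r : ℂ) + Complex.I * (b : ℂ)) ^ 6).re ^ 2
      + (48 * (m : ℂ) ^ 2 / ((r : ℂ) + Complex.I * (b : ℂ)) ^ 6).im ^ 2
      = 48 ^ 2 * m ^ 4 / P ^ 6 := by
  have h1 : ∀ z : ℂ, z.re ^ 2 + z.im ^ 2 = Complex.normSq z := by
    intro z; rw [Complex.normSq_apply]; ring
  rw [h1]
  have h2 : 48 * (m : ℂ) ^ 2 = ((48 * m ^ 2 : ℝ) : ℂ) := by push_cast; ring
  rw [h2, map_div₀, Complex.normSq_ofReal, map_pow]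
  have h3 : Complex.normSq ((r : ℂ) + Complex.I * (b : ℂ)) = P := by
    rw [Complex.normSq_apply]; simp; rw [hP]; ring
  rw [h3]
  ring

lemma den_eq (P m : ℝ) (hP : 0 < P) (hm : 0 < m) :
    ((48:ℝ) ^ 2 * m ^ 4 / P ^ 6) ^ ((9:ℝ)/4)
      = (48 * m ^ 2 / P ^ 3) ^ 4 * (4 * Real.sqrt 3 * m / (P * Real.sqrt P)) := by
  have ht : (0:ℝ) < 48 * m ^ 2 / P ^ 3 := by positivity
  have h3 : Real.sqrt 3 ^ 2 = 3 := Real.sq_sqrt (by norm_num)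
  have hPs : Real.sqrt P ^ 2 = P := Real.sq_sqrt hP.le
  have e1 : (4 * Real.sqrt 3 * m) ^ 2 = 48 * m ^ 2 := by linear_combination (16 * m ^ 2) * h3
  have e2 : (P * Real.sqrt P) ^ 2 = P ^ 3 := by linear_combination (P ^ 2) * hPs
  have hq : (0:ℝ) ≤ 4 * Real.sqrt 3 * m / (P * Real.sqrt P) := by positivity
  have hs : Real.sqrt (48 * m ^ 2 / P ^ 3) = 4 * Real.sqrt 3 * m / (P * Real.sqrt P) := by
    rw [show 48 * m ^ 2 / P ^ 3 = (4 * Real.sqrt 3 * m / (P * Real.sqrt P)) ^ 2 from by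
      rw [div_pow, e1, e2], Real.sqrt_sq hq]
  calc ((48:ℝ) ^ 2 * m ^ 4 / P ^ 6) ^ ((9:ℝ)/4)
      = ((48 * m ^ 2 / P ^ 3) ^ (2:ℕ)) ^ ((9:ℝ)/4) := by norm_num; ring_nf
    _ = (48 * m ^ 2 / P ^ 3) ^ ((2:ℝ) * ((9:ℝ)/4)) := by
        rw [← Real.rpow_natCast (48 * m ^ 2 / P ^ 3) 2, ← Real.rpow_mul ht.le]; norm_num
    _ = (48 * m ^ 2 / P ^ 3) ^ ((4:ℝ) + (1/2:ℝ)) := by norm_num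
    _ = (48 * m ^ 2 / P ^ 3) ^ (4:ℕ) * (48 * m ^ 2 / P ^ 3) ^ ((1:ℝ)/2) := by
        rw [Real.rpow_add ht, ← Real.rpow_natCast (48 * m ^ 2 / P ^ 3) 4]; norm_num
    _ = (48 * m ^ 2 / P ^ 3) ^ 4 * (4 * Real.sqrt 3 * m / (P * Real.sqrt P)) := by
        rw [← Real.sqrt_eq_rpow, hs]

lemma p32_eq (P : ℝ) (hP : 0 < P) : P ^ ((3:ℝ)/2) = P * Real.sqrt P := by
  rw [show ((3:ℝ)/2) = (1:ℝ) + (1/2:ℝ) by norm_num, Real.rpow_add hP, Real.rpow_one,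
    ← Real.sqrt_eq_rpow]

lemma sinsq_E (a m Λ r θ : ℝ) :
    Δr a m Λ r - (a * Real.sin θ) ^ 2 * Δθ a Λ θ = E a m Λ r θ / 3 := by
  unfold Δr Δθ E
  linear_combination (-(a ^ 2) * (1 + a ^ 2 * Λ / 3 * Real.cos θ ^ 2)) * Real.sin_sq θ

/-- For the Kerr–(anti-)de Sitter black hole with `m > 0`, the
Abdelqader–Lake invariant `Q₁` has the stated closed form; in particular `Q₁` vanishes
on the ergosurfaces `E = 0` and on the cones `r = ± a cos θ`. -/
theorem Q1_closed_form (a m Λ : ℝ) (hm : 0 < m) (r θ : ℝ) (h : 0 < rho2 a r θ) :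
    Q1 a m Λ r θ =
      -(E a m Λ r θ * (a ^ 2 * Real.cos θ ^ 2 - r ^ 2)) /
        (3 * m * rho2 a r θ ^ ((3 : ℝ) / 2)) ∧
    (E a m Λ r θ = 0 → Q1 a m Λ r θ = 0) ∧
    ((r = a * Real.cos θ ∨ r = -(a * Real.cos θ)) → Q1 a m Λ r θ = 0) := by
  have hPeq : rho2 a r θ = r ^ 2 + (a * Real.cos θ) ^ 2 := by unfold rho2; ring
  have hP0 : rho2 a r θ ≠ 0 := ne_of_gt h
  have hw : (r : ℂ) + Complex.I * ((a * Real.cos θ : ℝ) : ℂ) ≠ 0 := by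
    intro h0
    obtain ⟨h1, h2⟩ := (zero_iff r (a * Real.cos θ)).mp h0
    rw [hPeq, h1, h2] at h
    norm_num at h
  have hv : (r : ℂ) - Complex.I * ((a * Real.cos θ : ℝ) : ℂ) ≠ 0 := fun h0 =>
    hw ((zero_iff r (a * Real.cos θ)).mpr ((sub_zero_iff r (a * Real.cos θ)).mp h0))
  -- derivative computations
  have hd1r : deriv (fun r' => I1 a m r' θ) r
      = (-288 * (m : ℂ) ^ 2 / ((r : ℂ) + Complex.I * ((a * Real.cos θ : ℝ) : ℂ)) ^ 7).re := by
    have hfun : (fun r' => I1 a m r' θ)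
        = fun r' => (48 * (m : ℂ) ^ 2
            / (((r' : ℝ) : ℂ) + Complex.I * ((a * Real.cos θ : ℝ) : ℂ)) ^ 6).re := by
      funext r'; rw [I1, Ic_eq]
    rw [hfun]
    exact (hasDerivAt_re (hasDerivAt_r m (a * Real.cos θ) r hw)).deriv
  have hd2r : deriv (fun r' => I2 a m r' θ) r
      = (-288 * (m : ℂ) ^ 2 / ((r : ℂ) + Complex.I * ((a * Real.cos θ : ℝ) : ℂ)) ^ 7).im := by
    have hfun : (fun r' => I2 a m r' θ)
        = fun r' => (48 * (m : ℂ) ^ 2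
            / (((r' : ℝ) : ℂ) + Complex.I * ((a * Real.cos θ : ℝ) : ℂ)) ^ 6).im := by
      funext r'; rw [I2, Ic_eq]
    rw [hfun]
    exact (hasDerivAt_im (hasDerivAt_r m (a * Real.cos θ) r hw)).deriv
  have hd1θ : deriv (fun θ' => I1 a m r θ') θ
      = (288 * (m : ℂ) ^ 2 * Complex.I * ((a * Real.sin θ : ℝ) : ℂ)
          / ((r : ℂ) + Complex.I * ((a * Real.cos θ : ℝ) : ℂ)) ^ 7).re := by
    have hfun : (fun θ' => I1 a m r θ')
        = fun θ' => (48 * (m : ℂ) ^ 2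
            / ((r : ℂ) + Complex.I * ((a * Real.cos θ' : ℝ) : ℂ)) ^ 6).re := by
      funext θ'; rw [I1, Ic_eq]
    rw [hfun]
    exact (hasDerivAt_re (hasDerivAt_θfun a m r θ hw)).deriv
  have hd2θ : deriv (fun θ' => I2 a m r θ') θ
      = (288 * (m : ℂ) ^ 2 * Complex.I * ((a * Real.sin θ : ℝ) : ℂ)
          / ((r : ℂ) + Complex.I * ((a * Real.cos θ : ℝ) : ℂ)) ^ 7).im := by
    have hfun : (fun θ' => I2 a m r θ')
        = fun θ' => (48 * (m : ℂ) ^ 2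
            / ((r : ℂ) + Complex.I * ((a * Real.cos θ' : ℝ) : ℂ)) ^ 6).im := by
      funext θ'; rw [I2, Ic_eq]
    rw [hfun]
    exact (hasDerivAt_im (hasDerivAt_θfun a m r θ hw)).deriv
  have key : Q1 a m Λ r θ =
      -(E a m Λ r θ * (a ^ 2 * Real.cos θ ^ 2 - r ^ 2)) /
        (3 * m * rho2 a r θ ^ ((3 : ℝ) / 2)) := by
    unfold Q1 I5 I6 I7
    rw [hd1r, hd2r, hd1θ, hd2θ]
    simp only [I1, I2]
    rw [Ic_eq]
    rw [num_bridge (Δr a m Λ r) (Δθ a Λ θ) (rho2 a r θ)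
      (48 * (m : ℂ) ^ 2 / ((r : ℂ) + Complex.I * ((a * Real.cos θ : ℝ) : ℂ)) ^ 6)
      (-288 * (m : ℂ) ^ 2 / ((r : ℂ) + Complex.I * ((a * Real.cos θ : ℝ) : ℂ)) ^ 7)
      (288 * (m : ℂ) ^ 2 * Complex.I * ((a * Real.sin θ : ℝ) : ℂ)
        / ((r : ℂ) + Complex.I * ((a * Real.cos θ : ℝ) : ℂ)) ^ 7)]
    rw [re_K_dr m r (a * Real.cos θ) (rho2 a r θ) hw hv hPeq,
      re_K_dth m r (a * Real.cos θ) (a * Real.sin θ) (rho2 a r θ) hw hv hPeq,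
      normSq_z m r (a * Real.cos θ) (rho2 a r θ) hPeq]
    rw [den_eq (rho2 a r θ) m h hm, p32_eq (rho2 a r θ) h]
    -- combine the two gradient terms using `sinsq_E`
    have hE3 := sinsq_E a m Λ r θ
    have h3 : Real.sqrt 3 ^ 2 = 3 := Real.sq_sqrt (by norm_num)
    have h30 : (0:ℝ) < Real.sqrt 3 := Real.sqrt_pos.mpr (by norm_num)
    have hPs : Real.sqrt (rho2 a r θ) ^ 2 = rho2 a r θ := Real.sq_sqrt h.le
    have hPs0 : (0:ℝ) < Real.sqrt (rho2 a r θ) := Real.sqrt_pos.mpr h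
    set u : ℝ := Real.sqrt (rho2 a r θ) with hu
    set s3 : ℝ := Real.sqrt 3 with hs3
    have hE' : E a m Λ r θ = 3 * (Δr a m Λ r - (a * Real.sin θ) ^ 2 * Δθ a Λ θ) := by
      linarith
    rw [← hPs, hE']
    field_simp
    ring_nf
    rw [h3]
    ring
  refine ⟨key, fun hE => by rw [key, hE]; simp, fun hr => ?_⟩
  have hzero : a ^ 2 * Real.cos θ ^ 2 - r ^ 2 = 0 := by
    rcases hr with h' | h' <;> rw [h'] <;> ring
  rw [key, hzero]
  simp

end KerrAdS
end
end
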